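/- Let Γ be a countable group and μ a probability measure on Γ whose support generates Γ, with finite entropy H(μ), such that the associated random walk is transient. Then for every n ≥ 0, E[d_G(e, Z_n)] ≤ E[−ln μ^n(Z_n)] = H(μ^n); consequently Σ_{x∈Γ} μ^n(x) · (−ln Σ_{k≥0} μ^k(x)) + ln G(e,e) ≤ H(μ^n) for all n. -/

import Mathlib

open MeasureTheory ProbabilityTheory Filter
open scoped ENNReal

noncomputable section

variable {Γ Ω : Type*}

/-- Position at time `n` of the random walk started at `x` with i.i.d. increments
`X 0, X 1, …` : `Z_n = x * X_0 * X_1 * ⋯ * X_{n-1}` (ordered product). -/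
def walk [Group Γ] (x : Γ) (X : ℕ → Ω → Γ) (n : ℕ) (ω : Ω) : Γ :=
  x * ((List.range n).map fun k => X k ω).prod

/-- Hitting probability `F(x,y) = ℙ^x[∃ n ≥ 0, Z_n = y]`. -/
def hitProb [Group Γ] [MeasurableSpace Ω] (P : Measure Ω) (X : ℕ → Ω → Γ) (x y : Γ) : ℝ≥0∞ :=
  P {ω | ∃ n : ℕ, walk x X n ω = y}

/-- Green metric `d_G(x,y) = -ln F(x,y)`. -/
def greenDist [Group Γ] [MeasurableSpace Ω] (P : Measure Ω) (X : ℕ → Ω → Γ) (x y : Γ) : ℝ :=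
  - Real.log (hitProb P X x y).toReal

/-- Green function `G(x,y) = Σ_{n≥0} ℙ^x[Z_n = y]`. -/
def greenFn [Group Γ] [MeasurableSpace Ω] (P : Measure Ω) (X : ℕ → Ω → Γ) (x y : Γ) : ℝ≥0∞ :=
  ∑' n : ℕ, P {ω | walk x X n ω = y}

/-- Martin kernel `K(x,y) = G(x,y)/G(e,y)` (real-valued; `G` is finite by transience). -/
def martinK [Group Γ] [MeasurableSpace Ω] (P : Measure Ω) (X : ℕ → Ω → Γ) (x y : Γ) : ℝ :=
  (greenFn P X x y).toReal / (greenFn P X 1 y).toReal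

/-- Word ball of radius `n` for the generating set `S` : elements expressible as a
product of at most `n` generators. -/
def wordBall [Group Γ] (S : Finset Γ) (n : ℕ) : Set Γ :=
  {x | ∃ l : List Γ, l.length ≤ n ∧ (∀ g ∈ l, g ∈ (S : Set Γ)) ∧ l.prod = x}

set_option linter.unusedSectionVars false
set_option linter.unusedVariables false

namespace RWAux

variable [Group Γ] [Countable Γ] [MeasurableSpace Γ] [MeasurableSingletonClass Γ]
  [MeasurableSpace Ω]

def pp (X : ℕ → Ω → Γ) (j k : ℕ) (ω : Ω) : Γ :=
  (((List.range k).map fun i => X (j + i) ω)).prod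

lemma walk_one_eq_pp (X : ℕ → Ω → Γ) (n : ℕ) : walk (1:Γ) X n = pp X 0 n := by
  funext ω; simp [walk, pp]

lemma pp_zero (X : ℕ → Ω → Γ) (j : ℕ) : pp X j 0 = fun _ => (1:Γ) := by
  funext ω; simp [pp]

lemma pp_succ (X : ℕ → Ω → Γ) (j k : ℕ) (ω : Ω) :
    pp X j (k+1) ω = pp X j k ω * X (j+k) ω := by
  simp [pp, List.range_succ]

lemma pp_add (X : ℕ → Ω → Γ) (j k l : ℕ) (ω : Ω) :
    pp X j (k+l) ω = pp X j k ω * pp X (j+k) l ω := by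
  simp only [pp, List.range_add, List.map_append, List.prod_append, List.map_map]
  congr 1
  congr 1
  refine List.map_congr_left fun i _ => ?_
  simp [Function.comp, Nat.add_assoc]

instance : MeasurableMul₂ Γ := ⟨measurable_of_countable _⟩

lemma measurable_pp (X : ℕ → Ω → Γ) (hmeas : ∀ k, Measurable (X k)) (j k : ℕ) :
    Measurable (pp X j k) := by
  induction k with
  | zero => rw [pp_zero]; exact measurable_const
  | succ k ih =>
    have : pp X j (k+1) = fun ω => pp X j k ω * X (j+k) ω := funext fun ω => pp_succ X j k ω
    rw [this]; exact ih.mul (hmeas _)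

lemma measurable_walk (X : ℕ → Ω → Γ) (hmeas : ∀ k, Measurable (X k)) (n : ℕ) :
    Measurable (walk (1:Γ) X n) := by
  rw [walk_one_eq_pp]; exact measurable_pp X hmeas 0 n


def restr (X : ℕ → Ω → Γ) (T : Finset ℕ) : Ω → ((i : T) → Γ) := fun ω i => X i ω

def vec (X : ℕ → Ω → Γ) (j k : ℕ) : Ω → (Fin k → Γ) := fun ω i => X (j + i) ω

def ppOf (T : Finset ℕ) (j k : ℕ) (g : (i : T) → Γ) : Γ :=
  ((List.range k).map fun i => if h : j + i ∈ T then g ⟨j + i, h⟩ else 1).prod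

def ppFin (k : ℕ) (f : Fin k → Γ) : Γ :=
  ((List.range k).map fun i => if h : i < k then f ⟨i, h⟩ else 1).prod

variable {P : Measure Ω} {μ : Measure Γ} {X : ℕ → Ω → Γ}

lemma measurable_restr (hmeas : ∀ k, Measurable (X k)) (T : Finset ℕ) :
    Measurable (restr X T) := measurable_pi_lambda _ fun i => hmeas i

lemma measurable_vec (hmeas : ∀ k, Measurable (X k)) (j k : ℕ) :
    Measurable (vec X j k) := measurable_pi_lambda _ fun i => hmeas _

lemma pp_eq_ppOf {T : Finset ℕ} {j k : ℕ} (hT : ∀ i, i < k → j + i ∈ T) (ω : Ω) :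
    pp X j k ω = ppOf T j k (restr X T ω) := by
  unfold pp ppOf
  congr 1
  refine (List.map_congr_left fun i hi => ?_).symm
  rw [dif_pos (hT i (List.mem_range.mp hi))]
  rfl

lemma pp_eq_ppFin (j k : ℕ) (ω : Ω) :
    pp X j k ω = ppFin k (vec X j k ω) := by
  unfold pp ppFin
  congr 1
  refine (List.map_congr_left fun i hi => ?_).symm
  rw [dif_pos (List.mem_range.mp hi)]
  rfl

lemma meas_vec_singleton
    (hiid : iIndepFun (m := fun _ => ‹MeasurableSpace Γ›) X P)
    (hlaw : ∀ k, Measure.map (X k) P = μ) (hmeas : ∀ k, Measurable (X k))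
    (j k : ℕ) (f : Fin k → Γ) :
    P (vec X j k ⁻¹' {f}) = ∏ i : Fin k, μ {f i} := by
  classical
  set s : Finset ℕ := (Finset.range k).image (j + ·) with hs
  set sets : ℕ → Set Γ := fun m => if h : m - j < k then {f ⟨m - j, h⟩} else Set.univ with hsetsdef
  have hsets : ∀ i : Fin k, sets (j + i) = {f i} := by
    intro i
    have hv : j + (i : ℕ) - j = (i : ℕ) := by omega
    have hlt : j + (i : ℕ) - j < k := by rw [hv]; exact i.2
    simp only [hsetsdef]
    rw [dif_pos hlt]
    have : (⟨j + (i : ℕ) - j, hlt⟩ : Fin k) = i := by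
      apply Fin.ext; exact hv
    rw [this]
  have h1 : vec X j k ⁻¹' {f} = ⋂ m ∈ s, X m ⁻¹' sets m := by
    ext ω
    simp only [Set.mem_preimage, Set.mem_singleton_iff, funext_iff, Set.mem_iInter, vec]
    constructor
    · intro h m hm
      obtain ⟨i, hi, rfl⟩ := Finset.mem_image.mp hm
      have hik : i < k := Finset.mem_range.mp hi
      have := h ⟨i, hik⟩
      rw [hsets ⟨i, hik⟩]
      exact this
    · intro h i
      have hm : j + (i : ℕ) ∈ s := Finset.mem_image.mpr ⟨i, Finset.mem_range.mpr i.2, rfl⟩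
      have := h _ hm
      rwa [hsets i] at this
  have h2 := hiid.measure_inter_preimage_eq_mul s
    (sets := sets) (fun m _ => (sets m).to_countable.measurableSet)
  rw [h1, h2, hs]
  rw [Finset.prod_image (fun a _ b _ h => by omega)]
  rw [← Fin.prod_univ_eq_prod_range (fun i => P (X (j + i) ⁻¹' sets (j + i))) k]
  refine Finset.prod_congr rfl fun i _ => ?_
  rw [hsets i, ← hlaw (j + (i : ℕ)), Measure.map_apply (hmeas _) (measurableSet_singleton _)]

lemma measure_vec_preimage_eq
    (hiid : iIndepFun (m := fun _ => ‹MeasurableSpace Γ›) X P)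
    (hlaw : ∀ k, Measure.map (X k) P = μ) (hmeas : ∀ k, Measurable (X k))
    (j k : ℕ) (C : Set (Fin k → Γ)) :
    P (vec X j k ⁻¹' C) = P (vec X 0 k ⁻¹' C) := by
  rw [← tsum_measure_preimage_singleton C.to_countable
    (fun y _ => (measurable_vec hmeas j k) (measurableSet_singleton y)),
    ← tsum_measure_preimage_singleton C.to_countable
    (fun y _ => (measurable_vec hmeas 0 k) (measurableSet_singleton y))]
  exact tsum_congr fun b => by
    rw [meas_vec_singleton hiid hlaw hmeas, meas_vec_singleton hiid hlaw hmeas]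

lemma shift_pp_law
    (hiid : iIndepFun (m := fun _ => ‹MeasurableSpace Γ›) X P)
    (hlaw : ∀ k, Measure.map (X k) P = μ) (hmeas : ∀ k, Measurable (X k))
    (j k : ℕ) (z : Γ) :
    P {ω | pp X j k ω = z} = P {ω | pp X 0 k ω = z} := by
  have hset : ∀ j', {ω | pp X j' k ω = z} = vec X j' k ⁻¹' {f | ppFin k f = z} := by
    intro j'; ext ω; simp [Set.mem_preimage, pp_eq_ppFin j' k ω]
  rw [hset j, hset 0, measure_vec_preimage_eq hiid hlaw hmeas]

lemma measure_inter_restrict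
    (hiid : iIndepFun (m := fun _ => ‹MeasurableSpace Γ›) X P)
    (hmeas : ∀ k, Measurable (X k)) {S T : Finset ℕ} (hST : Disjoint S T)
    (A : Set ((i : S) → Γ)) (B : Set ((i : T) → Γ)) :
    P (restr X S ⁻¹' A ∩ restr X T ⁻¹' B) = P (restr X S ⁻¹' A) * P (restr X T ⁻¹' B) :=
  (hiid.indepFun_finset S T hST hmeas).measure_inter_preimage_eq_mul A B
    A.to_countable.measurableSet B.to_countable.measurableSet


lemma sc (hiid : iIndepFun (m := fun _ => ‹MeasurableSpace Γ›) X P)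
    (hlaw : ∀ k, Measure.map (X k) P = μ) (hmeas : ∀ k, Measurable (X k))
    (n k : ℕ) (x z : Γ) :
    P {ω | pp X 0 n ω = x} * P {ω | pp X 0 k ω = z} ≤ P {ω | pp X 0 (n + k) ω = x * z} := by
  classical
  set S := Finset.range n with hSdef
  set T := (Finset.range k).image (n + ·) with hTdef
  have hST : Disjoint S T := by
    rw [Finset.disjoint_left]; intro a haS haT
    obtain ⟨i, hi, rfl⟩ := Finset.mem_image.mp haT
    have := Finset.mem_range.mp haS; omega
  have hA : {ω | pp X 0 n ω = x} = restr X S ⁻¹' {g | ppOf S 0 n g = x} := by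
    ext ω; simp only [Set.mem_setOf_eq, Set.mem_preimage]
    rw [← pp_eq_ppOf (fun i hi => by simp only [hSdef, Finset.mem_range]; omega) ω]
  have hB : {ω | pp X n k ω = z} = restr X T ⁻¹' {g | ppOf T n k g = z} := by
    ext ω; simp only [Set.mem_setOf_eq, Set.mem_preimage]
    rw [← pp_eq_ppOf (fun i hi => Finset.mem_image.mpr ⟨i, Finset.mem_range.mpr hi, rfl⟩) ω]
  have hsub : {ω | pp X 0 n ω = x} ∩ {ω | pp X n k ω = z} ⊆ {ω | pp X 0 (n + k) ω = x * z} := by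
    rintro ω ⟨h1, h2⟩
    simp only [Set.mem_setOf_eq] at h1 h2 ⊢
    rw [pp_add, Nat.zero_add, h1, h2]
  calc P {ω | pp X 0 n ω = x} * P {ω | pp X 0 k ω = z}
      = P {ω | pp X 0 n ω = x} * P {ω | pp X n k ω = z} := by
        rw [shift_pp_law hiid hlaw hmeas n k z]
    _ = P ({ω | pp X 0 n ω = x} ∩ {ω | pp X n k ω = z}) := by
        rw [hA, hB, measure_inter_restrict hiid hmeas hST]
    _ ≤ _ := measure_mono hsub

def hitE (X : ℕ → Ω → Γ) (x : Γ) (j : ℕ) : Set Ω :=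
  {ω | pp X 0 j ω = x ∧ ∀ i < j, pp X 0 i ω ≠ x}

lemma measurableSet_hitE (hmeas : ∀ k, Measurable (X k)) (x : Γ) (j : ℕ) :
    MeasurableSet (hitE X x j) := by
  have : hitE X x j = (pp X 0 j ⁻¹' {x}) ∩ ⋂ i ∈ Set.Iio j, (pp X 0 i ⁻¹' {x})ᶜ := by
    ext ω
    simp only [hitE, Set.mem_setOf_eq, Set.mem_inter_iff, Set.mem_preimage,
      Set.mem_singleton_iff, Set.mem_iInter, Set.mem_compl_iff, Set.mem_Iio]
  rw [this]
  exact ((measurable_pp X hmeas 0 j) (measurableSet_singleton x)).inter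
    (MeasurableSet.biInter (Set.to_countable _) fun i _ =>
      ((measurable_pp X hmeas 0 i) (measurableSet_singleton x)).compl)

lemma hitE_disjoint (x : Γ) : Pairwise (Function.onFun Disjoint (hitE X x)) := by
  intro a b hab
  rw [Function.onFun, Set.disjoint_left]
  intro ω ha hb
  rcases lt_or_gt_of_ne hab with h | h
  · exact hb.2 a h ha.1
  · exact ha.2 b h hb.1

lemma measure_hitE_inter (hiid : iIndepFun (m := fun _ => ‹MeasurableSpace Γ›) X P)
    (hlaw : ∀ k, Measure.map (X k) P = μ) (hmeas : ∀ k, Measurable (X k))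
    (x : Γ) (j k : ℕ) :
    P (hitE X x j ∩ {ω | pp X j k ω = 1}) = P (hitE X x j) * P {ω | pp X 0 k ω = 1} := by
  classical
  set S := Finset.range j with hSdef
  set T := (Finset.range k).image (j + ·) with hTdef
  have hST : Disjoint S T := by
    rw [Finset.disjoint_left]; intro a haS haT
    obtain ⟨i, hi, rfl⟩ := Finset.mem_image.mp haT
    have := Finset.mem_range.mp haS; omega
  have hj : ∀ (ω : Ω) (i : ℕ), i ≤ j → pp X 0 i ω = ppOf S 0 i (restr X S ω) := fun ω i hij =>
    pp_eq_ppOf (fun m hm => by simp only [hSdef, Finset.mem_range]; omega) ω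
  have hA : hitE X x j
      = restr X S ⁻¹' {g | ppOf S 0 j g = x ∧ ∀ i < j, ppOf S 0 i g ≠ x} := by
    ext ω
    simp only [hitE, Set.mem_setOf_eq, Set.mem_preimage]
    rw [← hj ω j le_rfl]
    constructor
    · rintro ⟨h1, h2⟩
      exact ⟨h1, fun i hi => by rw [← hj ω i (le_of_lt hi)]; exact h2 i hi⟩
    · rintro ⟨h1, h2⟩
      exact ⟨h1, fun i hi => by rw [hj ω i (le_of_lt hi)]; exact h2 i hi⟩
  have hB : {ω | pp X j k ω = 1} = restr X T ⁻¹' {g | ppOf T j k g = 1} := by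
    ext ω; simp only [Set.mem_setOf_eq, Set.mem_preimage]
    rw [← pp_eq_ppOf (fun i hi => Finset.mem_image.mpr ⟨i, Finset.mem_range.mpr hi, rfl⟩) ω]
  calc P (hitE X x j ∩ {ω | pp X j k ω = 1})
      = P (hitE X x j) * P {ω | pp X j k ω = 1} := by
        rw [hA, hB, measure_inter_restrict hiid hmeas hST]
    _ = P (hitE X x j) * P {ω | pp X 0 k ω = 1} := by
        rw [shift_pp_law hiid hlaw hmeas]

lemma cover (x : Γ) (m : ℕ) :
    {ω | pp X 0 m ω = x}
      ⊆ ⋃ j ∈ Finset.range (m+1), (hitE X x j ∩ {ω | pp X j (m - j) ω = 1}) := by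
  intro ω h
  simp only [Set.mem_setOf_eq] at h
  classical
  have hQ : ∃ i, pp X 0 i ω = x := ⟨m, h⟩
  let j := Nat.find hQ
  have hjm : j ≤ m := Nat.find_min' hQ h
  have hspec : pp X 0 j ω = x := Nat.find_spec hQ
  have hmin : ∀ i < j, pp X 0 i ω ≠ x := fun i hi => Nat.find_min hQ hi
  have hrest : pp X j (m - j) ω = 1 := by
    have := pp_add X 0 j (m - j) ω
    rw [Nat.zero_add, Nat.add_sub_cancel' hjm] at this
    rw [h, hspec] at this
    exact (left_eq_mul.mp this)
  exact Set.mem_biUnion (Finset.mem_coe.mpr (Finset.mem_range.mpr (by omega)))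
    ⟨⟨hspec, hmin⟩, hrest⟩

lemma tsum_hitE_le_one [IsProbabilityMeasure P] (hmeas : ∀ k, Measurable (X k)) (x : Γ) :
    ∑' j, P (hitE X x j) ≤ 1 := by
  rw [← measure_iUnion (hitE_disjoint x) (fun j => measurableSet_hitE hmeas x j)]
  exact prob_le_one

lemma green_le (hiid : iIndepFun (m := fun _ => ‹MeasurableSpace Γ›) X P)
    (hlaw : ∀ k, Measure.map (X k) P = μ) (hmeas : ∀ k, Measurable (X k))
    [IsProbabilityMeasure P] (x : Γ) :
    ∑' m, P {ω | pp X 0 m ω = x} ≤ ∑' k, P {ω | pp X 0 k ω = 1} := by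
  set e : ℕ → ℝ≥0∞ := fun j => P (hitE X x j) with he
  set g : ℕ → ℝ≥0∞ := fun k => P {ω | pp X 0 k ω = 1} with hg
  have step : ∀ m, P {ω | pp X 0 m ω = x} ≤ ∑ j ∈ Finset.range (m+1), e j * g (m - j) := by
    intro m
    calc P {ω | pp X 0 m ω = x}
        ≤ P (⋃ j ∈ Finset.range (m+1), (hitE X x j ∩ {ω | pp X j (m - j) ω = 1})) :=
          measure_mono (cover x m)
      _ ≤ ∑ j ∈ Finset.range (m+1), P (hitE X x j ∩ {ω | pp X j (m - j) ω = 1}) :=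
          measure_biUnion_finset_le _ _
      _ = ∑ j ∈ Finset.range (m+1), e j * g (m - j) :=
          Finset.sum_congr rfl fun j _ => measure_hitE_inter hiid hlaw hmeas x j (m - j)
  calc ∑' m, P {ω | pp X 0 m ω = x}
      ≤ ∑' m, ∑ j ∈ Finset.range (m+1), e j * g (m - j) :=
        Summable.tsum_le_tsum step ENNReal.summable ENNReal.summable
    _ = ∑' m, ∑ ij ∈ Finset.HasAntidiagonal.antidiagonal m, e ij.1 * g ij.2 := by
        refine tsum_congr fun m => ?_
        rw [Finset.Nat.sum_antidiagonal_eq_sum_range_succ_mk]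
    _ = ∑' m, ∑' ij : ↥(Finset.HasAntidiagonal.antidiagonal m), e (ij : ℕ × ℕ).1 * g (ij : ℕ × ℕ).2 :=
        tsum_congr fun m => (Finset.tsum_subtype _ (fun p : ℕ × ℕ => e p.1 * g p.2)).symm
    _ = ∑' (x : Σ n : ℕ, ↥(Finset.HasAntidiagonal.antidiagonal n)), e (x.2 : ℕ × ℕ).1 * g (x.2 : ℕ × ℕ).2 :=
        (ENNReal.tsum_sigma' (fun x : (Σ n : ℕ, ↥(Finset.HasAntidiagonal.antidiagonal n)) =>
          e (x.2 : ℕ × ℕ).1 * g (x.2 : ℕ × ℕ).2)).symm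
    _ = ∑' p : ℕ × ℕ, e p.1 * g p.2 :=
        Finset.HasAntidiagonal.sigmaAntidiagonalEquivProd.tsum_eq (fun p : ℕ × ℕ => e p.1 * g p.2)
    _ = (∑' j, e j) * ∑' k, g k := by
        rw [ENNReal.tsum_prod']
        simp_rw [ENNReal.tsum_mul_left, ENNReal.tsum_mul_right]
    _ ≤ 1 * ∑' k, g k := mul_le_mul_left (tsum_hitE_le_one hmeas x) _
    _ = _ := one_mul _

lemma green_ge (hiid : iIndepFun (m := fun _ => ‹MeasurableSpace Γ›) X P)
    (hlaw : ∀ k, Measure.map (X k) P = μ) (hmeas : ∀ k, Measurable (X k))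
    (n : ℕ) (x : Γ) :
    P {ω | pp X 0 n ω = x} * ∑' k, P {ω | pp X 0 k ω = 1}
      ≤ ∑' m, P {ω | pp X 0 m ω = x} := by
  rw [← ENNReal.tsum_mul_left]
  calc ∑' k, P {ω | pp X 0 n ω = x} * P {ω | pp X 0 k ω = 1}
      ≤ ∑' k, P {ω | pp X 0 (n + k) ω = x} :=
        Summable.tsum_le_tsum (fun k => by simpa using sc hiid hlaw hmeas n k x 1)
          ENNReal.summable ENNReal.summable
    _ ≤ ∑' m, P {ω | pp X 0 m ω = x} :=
        ENNReal.tsum_comp_le_tsum_of_injective (add_right_injective n) _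


lemma prod_le_pp (hiid : iIndepFun (m := fun _ => ‹MeasurableSpace Γ›) X P)
    (hlaw : ∀ k, Measure.map (X k) P = μ) (hmeas : ∀ k, Measurable (X k))
    (n : ℕ) (ω : Ω) :
    ∏ i ∈ Finset.range n, μ {X i ω} ≤ P {ω' | pp X 0 n ω' = pp X 0 n ω} := by
  have hsub : (⋂ i ∈ Finset.range n, X i ⁻¹' {X i ω}) ⊆ {ω' | pp X 0 n ω' = pp X 0 n ω} := by
    intro ω' h
    simp only [Set.mem_iInter, Set.mem_preimage, Set.mem_singleton_iff, Finset.mem_range] at h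
    simp only [Set.mem_setOf_eq, pp]
    congr 1
    refine List.map_congr_left fun i hi => ?_
    have hin : i < n := List.mem_range.mp hi
    have := h (0 + i) (by omega)
    rw [this]
  have hprod := hiid.measure_inter_preimage_eq_mul (Finset.range n)
    (sets := fun i => ({X i ω} : Set Γ)) (fun i _ => measurableSet_singleton _)
  have hfac : ∀ i, P (X i ⁻¹' {X i ω}) = μ {X i ω} := fun i => by
    rw [← hlaw i, Measure.map_apply (hmeas i) (measurableSet_singleton _)]
  calc ∏ i ∈ Finset.range n, μ {X i ω}
      = ∏ i ∈ Finset.range n, P (X i ⁻¹' {X i ω}) :=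
        Finset.prod_congr rfl fun i _ => (hfac i).symm
    _ = P (⋂ i ∈ Finset.range n, X i ⁻¹' {X i ω}) := hprod.symm
    _ ≤ _ := measure_mono hsub

lemma ae_pos (hlaw : ∀ k, Measure.map (X k) P = μ) (hmeas : ∀ k, Measurable (X k)) (n : ℕ) :
    ∀ᵐ ω ∂P, ∀ i ∈ Finset.range n, μ {X i ω} ≠ 0 := by
  have key : ∀ i : ℕ, ∀ᵐ ω ∂P, μ {X i ω} ≠ 0 := by
    intro i
    set D : Set Γ := {g | μ {g} = 0} with hD
    have hDnull : μ D = 0 := by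
      rw [← Set.biUnion_of_singleton D, measure_biUnion_null_iff D.to_countable]
      exact fun g hg => hg
    have : P {ω | μ {X i ω} = 0} = 0 := by
      have hpre : {ω | μ {X i ω} = 0} = X i ⁻¹' D := rfl
      rw [hpre, ← Measure.map_apply (hmeas i) D.to_countable.measurableSet, hlaw i, hDnull]
    rw [ae_iff]
    simpa using this
  rw [MeasureTheory.ae_all_iff]
  intro i
  exact (key i).mono fun ω h _ => h

lemma lint_neglog (ν : Measure Γ) (hν : ∀ x : Γ, ν {x} ≤ 1) :
    ∫⁻ g, ENNReal.ofReal (- Real.log ((ν {g}).toReal)) ∂ν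
      = ∑' g : Γ, ENNReal.ofReal (Real.negMulLog ((ν {g}).toReal)) := by
  rw [lintegral_countable']
  refine tsum_congr fun g => ?_
  have hne : ν {g} ≠ ⊤ := (lt_of_le_of_lt (hν g) ENNReal.one_lt_top).ne
  have ht1 : (ν {g}).toReal ≤ 1 := by
    have := ENNReal.toReal_mono ENNReal.one_ne_top (hν g)
    simpa using this
  have hlog : 0 ≤ - Real.log ((ν {g}).toReal) := by
    rw [neg_nonneg]
    exact Real.log_nonpos ENNReal.toReal_nonneg ht1
  set t : ℝ := (ν {g}).toReal with htdef
  calc ENNReal.ofReal (-Real.log t) * ν {g}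
      = ENNReal.ofReal (-Real.log t) * ENNReal.ofReal t := by rw [ENNReal.ofReal_toReal hne]
    _ = ENNReal.ofReal ((-Real.log t) * t) := (ENNReal.ofReal_mul hlog).symm
    _ = ENNReal.ofReal (Real.negMulLog t) := by rw [Real.negMulLog]; ring_nf

end RWAux

/-- for every `n`, `E[d_G(e,Z_n)] ≤ E[-ln μⁿ(Z_n)] = H(μⁿ)`;
consequently `Σ_x μⁿ(x)(-ln Σ_k μᵏ(x)) + ln G(e,e) ≤ H(μⁿ)`. -/
theorem expected_greenDist_le_entropy
    [Group Γ] [Countable Γ] [MeasurableSpace Γ] [MeasurableSingletonClass Γ]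
    [MeasurableSpace Ω] (P : Measure Ω) [IsProbabilityMeasure P]
    (μ : Measure Γ) [IsProbabilityMeasure μ]
    (X : ℕ → Ω → Γ) (hmeas : ∀ k, Measurable (X k))
    (hiid : iIndepFun (m := fun _ => ‹MeasurableSpace Γ›) X P)
    (hlaw : ∀ k, Measure.map (X k) P = μ)
    (hgen : Subgroup.closure {g : Γ | μ {g} ≠ 0} = ⊤)
    (htrans : P {ω | ∃ n ≥ 1, walk 1 X n ω = 1} < 1)
    (hent : Summable fun g : Γ => Real.negMulLog (μ {g}).toReal) :
    ∀ n : ℕ,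
      (∫ ω, greenDist P X 1 (walk 1 X n ω) ∂P
        ≤ ∫ ω, - Real.log ((Measure.map (walk 1 X n) P) {walk 1 X n ω}).toReal ∂P) ∧
      (∫ ω, - Real.log ((Measure.map (walk 1 X n) P) {walk 1 X n ω}).toReal ∂P
        = ∑' x : Γ, Real.negMulLog ((Measure.map (walk 1 X n) P) {x}).toReal) ∧
      ((∑' x : Γ, ((Measure.map (walk 1 X n) P) {x}).toReal *
          (- Real.log (∑' k : ℕ, ((Measure.map (walk 1 X k) P) {x}).toReal)))
          + Real.log (greenFn P X 1 1).toReal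
        ≤ ∑' x : Γ, Real.negMulLog ((Measure.map (walk 1 X n) P) {x}).toReal) := by
  intro n
  classical
  have hZ : ∀ m : ℕ, Measurable (walk (1:Γ) X m) := fun m => RWAux.measurable_walk X hmeas m
  have hppm : ∀ j m : ℕ, Measurable (RWAux.pp X j m) := fun j m => RWAux.measurable_pp X hmeas j m
  have hw : ∀ m : ℕ, walk (1:Γ) X m = RWAux.pp X 0 m := fun m => RWAux.walk_one_eq_pp X m
  have hmap : ∀ (m : ℕ) (y : Γ),
      (Measure.map (walk 1 X m) P) {y} = P {ω | RWAux.pp X 0 m ω = y} := by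
    intro m y
    rw [Measure.map_apply (hZ m) (measurableSet_singleton y)]
    congr 1
    ext ω
    simp [hw m]
  have hq1 : ∀ (m : ℕ) (y : Γ), P {ω | RWAux.pp X 0 m ω = y} ≤ 1 := fun m y => prob_le_one
  have hqt : ∀ (m : ℕ) (y : Γ), P {ω | RWAux.pp X 0 m ω = y} ≠ ⊤ :=
    fun m y => ((hq1 m y).trans_lt ENNReal.one_lt_top).ne
  have htoReal_le_one : ∀ a : ℝ≥0∞, a ≤ 1 → a.toReal ≤ 1 := fun a ha => by
    simpa using ENNReal.toReal_mono ENNReal.one_ne_top ha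
  have hf0 : ∀ a : ℝ≥0∞, a ≤ 1 → 0 ≤ - Real.log a.toReal := fun a ha => by
    rw [neg_nonneg]
    exact Real.log_nonpos ENNReal.toReal_nonneg (htoReal_le_one a ha)
  have hml1 : ∀ g : Γ, 0 ≤ Real.negMulLog ((μ {g}).toReal) := fun g =>
    Real.negMulLog_nonneg ENNReal.toReal_nonneg (htoReal_le_one _ prob_le_one)
  have hE1_ne : (∑' g : Γ, ENNReal.ofReal (Real.negMulLog ((μ {g}).toReal))) ≠ ⊤ := by
    rw [← ENNReal.ofReal_tsum_of_nonneg hml1 hent]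
    exact ENNReal.ofReal_ne_top
  have hlintl : ∀ i : ℕ,
      ∫⁻ ω, ENNReal.ofReal (- Real.log ((μ {X i ω}).toReal)) ∂P
        = ∑' g : Γ, ENNReal.ofReal (Real.negMulLog ((μ {g}).toReal)) := by
    intro i
    have h1 := lintegral_map (μ := P)
      (f := fun g : Γ => ENNReal.ofReal (- Real.log ((μ {g}).toReal)))
      (measurable_of_countable _) (hmeas i)
    rw [hlaw i] at h1
    exact h1.symm.trans (RWAux.lint_neglog μ (fun x => prob_le_one))
  have haefacts : ∀ᵐ ω ∂P, ∀ i ∈ Finset.range n, μ {X i ω} ≠ 0 := RWAux.ae_pos hlaw hmeas n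
  have hFle : ∀ᵐ ω ∂P, - Real.log ((P {ω' | RWAux.pp X 0 n ω' = RWAux.pp X 0 n ω}).toReal)
      ≤ ∑ i ∈ Finset.range n, - Real.log ((μ {X i ω}).toReal) := by
    filter_upwards [haefacts] with ω hpos
    have h1 := RWAux.prod_le_pp hiid hlaw hmeas n ω
    have hane : (∏ i ∈ Finset.range n, μ {X i ω}) ≠ ⊤ :=
      (h1.trans_lt ((hq1 n _).trans_lt ENNReal.one_lt_top)).ne
    have ha0 : (∏ i ∈ Finset.range n, μ {X i ω}) ≠ 0 := Finset.prod_ne_zero_iff.mpr hpos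
    have hapos : 0 < (∏ i ∈ Finset.range n, μ {X i ω}).toReal := ENNReal.toReal_pos ha0 hane
    have hle : (∏ i ∈ Finset.range n, μ {X i ω}).toReal
        ≤ (P {ω' | RWAux.pp X 0 n ω' = RWAux.pp X 0 n ω}).toReal :=
      ENNReal.toReal_mono (hqt n _) h1
    have hlog := Real.log_le_log hapos hle
    have hprodlog : Real.log ((∏ i ∈ Finset.range n, μ {X i ω}).toReal)
        = ∑ i ∈ Finset.range n, Real.log ((μ {X i ω}).toReal) := by
      rw [ENNReal.toReal_prod]
      exact Real.log_prod fun i hi =>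
        ENNReal.toReal_ne_zero.mpr ⟨hpos i hi, (prob_le_one.trans_lt ENNReal.one_lt_top).ne⟩
    calc - Real.log ((P {ω' | RWAux.pp X 0 n ω' = RWAux.pp X 0 n ω}).toReal)
        ≤ - Real.log ((∏ i ∈ Finset.range n, μ {X i ω}).toReal) := neg_le_neg hlog
      _ = ∑ i ∈ Finset.range n, - Real.log ((μ {X i ω}).toReal) := by
          rw [hprodlog, ← Finset.sum_neg_distrib]
  have hFnmeas : Measurable
      (fun ω => - Real.log ((P {ω' | RWAux.pp X 0 n ω' = RWAux.pp X 0 n ω}).toReal)) :=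
    (measurable_of_countable
      (fun y : Γ => - Real.log ((P {ω' | RWAux.pp X 0 n ω' = y}).toReal))).comp (hppm 0 n)
  have hlintFn :
      ∫⁻ ω, ENNReal.ofReal
          (- Real.log ((P {ω' | RWAux.pp X 0 n ω' = RWAux.pp X 0 n ω}).toReal)) ∂P
        ≤ (n : ℝ≥0∞) * ∑' g : Γ, ENNReal.ofReal (Real.negMulLog ((μ {g}).toReal)) := by
    calc ∫⁻ ω, ENNReal.ofReal
            (- Real.log ((P {ω' | RWAux.pp X 0 n ω' = RWAux.pp X 0 n ω}).toReal)) ∂P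
        ≤ ∫⁻ ω, ENNReal.ofReal (∑ i ∈ Finset.range n, - Real.log ((μ {X i ω}).toReal)) ∂P :=
          lintegral_mono_ae (hFle.mono fun ω h => ENNReal.ofReal_le_ofReal h)
      _ = ∫⁻ ω, ∑ i ∈ Finset.range n, ENNReal.ofReal (- Real.log ((μ {X i ω}).toReal)) ∂P := by
          refine lintegral_congr fun ω => ?_
          exact ENNReal.ofReal_sum_of_nonneg fun i _ => hf0 _ prob_le_one
      _ = ∑ i ∈ Finset.range n, ∫⁻ ω, ENNReal.ofReal (- Real.log ((μ {X i ω}).toReal)) ∂P :=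
          lintegral_finset_sum _ fun i _ =>
            (measurable_of_countable
              (fun g : Γ => ENNReal.ofReal (- Real.log ((μ {g}).toReal)))).comp (hmeas i)
      _ = ∑ _i ∈ Finset.range n,
            (∑' g : Γ, ENNReal.ofReal (Real.negMulLog ((μ {g}).toReal))) :=
          Finset.sum_congr rfl fun i _ => hlintl i
      _ = (n : ℝ≥0∞) * ∑' g : Γ, ENNReal.ofReal (Real.negMulLog ((μ {g}).toReal)) := by
          rw [Finset.sum_const, Finset.card_range, nsmul_eq_mul]
  have hBlt : (n : ℝ≥0∞) * (∑' g : Γ, ENNReal.ofReal (Real.negMulLog ((μ {g}).toReal))) < ⊤ :=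
    ENNReal.mul_lt_top (ENNReal.natCast_lt_top n) (lt_of_le_of_ne le_top hE1_ne)
  have hFint : Integrable
      (fun ω => - Real.log ((P {ω' | RWAux.pp X 0 n ω' = RWAux.pp X 0 n ω}).toReal)) P := by
    refine ⟨hFnmeas.aestronglyMeasurable, ?_⟩
    rw [hasFiniteIntegral_iff_ofReal (ae_of_all _ fun ω => hf0 _ (hq1 n _))]
    exact hlintFn.trans_lt hBlt
  have hhit : ∀ y : Γ,
      greenDist P X 1 y = - Real.log ((P {ω | ∃ m : ℕ, RWAux.pp X 0 m ω = y}).toReal) := by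
    intro y
    simp only [greenDist, hitProb, hw]
  have hhit_le : ∀ (m : ℕ) (y : Γ),
      P {ω | RWAux.pp X 0 m ω = y} ≤ P {ω | ∃ m' : ℕ, RWAux.pp X 0 m' ω = y} :=
    fun m y => measure_mono fun ω h => ⟨m, h⟩
  have hGd_nonneg : ∀ ω : Ω, 0 ≤ greenDist P X 1 (RWAux.pp X 0 n ω) := fun ω => by
    rw [hhit]
    exact hf0 _ prob_le_one
  have hGdle : ∀ᵐ ω ∂P, greenDist P X 1 (RWAux.pp X 0 n ω)
      ≤ - Real.log ((P {ω' | RWAux.pp X 0 n ω' = RWAux.pp X 0 n ω}).toReal) := by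
    filter_upwards [haefacts] with ω hpos
    have h1 := RWAux.prod_le_pp hiid hlaw hmeas n ω
    have ha0 : (∏ i ∈ Finset.range n, μ {X i ω}) ≠ 0 := Finset.prod_ne_zero_iff.mpr hpos
    have hq0 : P {ω' | RWAux.pp X 0 n ω' = RWAux.pp X 0 n ω} ≠ 0 := by
      intro h
      exact ha0 (le_antisymm (h ▸ h1) zero_le)
    have hqpos : 0 < (P {ω' | RWAux.pp X 0 n ω' = RWAux.pp X 0 n ω}).toReal :=
      ENNReal.toReal_pos hq0 (hqt n _)
    rw [hhit]
    apply neg_le_neg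
    exact Real.log_le_log hqpos
      (ENNReal.toReal_mono ((prob_le_one).trans_lt ENNReal.one_lt_top).ne (hhit_le n _))
  have hGdmeas : Measurable (fun ω => greenDist P X 1 (RWAux.pp X 0 n ω)) :=
    (measurable_of_countable (fun y : Γ => greenDist P X 1 y)).comp (hppm 0 n)
  have hGdint : Integrable (fun ω => greenDist P X 1 (RWAux.pp X 0 n ω)) P := by
    refine ⟨hGdmeas.aestronglyMeasurable, ?_⟩
    rw [hasFiniteIntegral_iff_ofReal (ae_of_all _ hGd_nonneg)]
    refine lt_of_le_of_lt ?_ (hlintFn.trans_lt hBlt)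
    exact lintegral_mono_ae (hGdle.mono fun ω h => ENNReal.ofReal_le_ofReal h)
  have part1 : ∫ ω, greenDist P X 1 (RWAux.pp X 0 n ω) ∂P
      ≤ ∫ ω, - Real.log ((P {ω' | RWAux.pp X 0 n ω' = RWAux.pp X 0 n ω}).toReal) ∂P :=
    integral_mono_ae hGdint hFint hGdle
  have hνapp : ∀ y : Γ,
      (Measure.map (RWAux.pp X 0 n) P) {y} = P {ω | RWAux.pp X 0 n ω = y} := fun y => by
    rw [Measure.map_apply (hppm 0 n) (measurableSet_singleton y)]
    rfl
  haveI hνprob : IsProbabilityMeasure (Measure.map (RWAux.pp X 0 n) P) :=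
    Measure.isProbabilityMeasure_map (hppm 0 n).aemeasurable
  have hint_f_ν : Integrable
      (fun y : Γ => - Real.log ((P {ω' | RWAux.pp X 0 n ω' = y}).toReal))
      (Measure.map (RWAux.pp X 0 n) P) :=
    (integrable_map_measure (measurable_of_countable _).aestronglyMeasurable
      (hppm 0 n).aemeasurable).mpr hFint
  have part2 : ∫ ω, - Real.log ((P {ω' | RWAux.pp X 0 n ω' = RWAux.pp X 0 n ω}).toReal) ∂P
      = ∑' y : Γ, Real.negMulLog ((P {ω | RWAux.pp X 0 n ω = y}).toReal) := by
    have h1 := integral_map (μ := P) (φ := RWAux.pp X 0 n) (hppm 0 n).aemeasurable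
      (f := fun y : Γ => - Real.log ((P {ω' | RWAux.pp X 0 n ω' = y}).toReal))
      (measurable_of_countable _).aestronglyMeasurable
    rw [← h1, integral_countable' hint_f_ν]
    refine tsum_congr fun y => ?_
    rw [measureReal_def, hνapp y, smul_eq_mul, Real.negMulLog]
    ring
  have hlint_fν :
      ∫⁻ y, ENNReal.ofReal (- Real.log ((P {ω' | RWAux.pp X 0 n ω' = y}).toReal))
        ∂(Measure.map (RWAux.pp X 0 n) P)
      = ∑' y : Γ, ENNReal.ofReal (Real.negMulLog ((P {ω | RWAux.pp X 0 n ω = y}).toReal)) := by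
    have h2 := RWAux.lint_neglog (Measure.map (RWAux.pp X 0 n) P) (fun x => prob_le_one)
    simp only [hνapp] at h2
    exact h2
  have hsumEn_ne :
      (∑' y : Γ, ENNReal.ofReal (Real.negMulLog ((P {ω | RWAux.pp X 0 n ω = y}).toReal))) ≠ ⊤ := by
    rw [← hlint_fν, lintegral_map (measurable_of_countable _) (hppm 0 n)]
    exact (hlintFn.trans_lt hBlt).ne
  have hsummable_nml :
      Summable (fun y : Γ => Real.negMulLog ((P {ω | RWAux.pp X 0 n ω = y}).toReal)) := by
    have h3 := ENNReal.summable_toReal hsumEn_ne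
    refine h3.congr fun y => ?_
    exact ENNReal.toReal_ofReal
      (Real.negMulLog_nonneg ENNReal.toReal_nonneg (htoReal_le_one _ (hq1 n y)))
  have hq_tsum_one : (∑' y : Γ, P {ω | RWAux.pp X 0 n ω = y}) = 1 := by
    have hdisj : Pairwise (Function.onFun Disjoint (fun y : Γ => {ω | RWAux.pp X 0 n ω = y})) := by
      intro a b hab
      rw [Function.onFun, Set.disjoint_left]
      intro ω h1 h2
      exact hab (h1.symm.trans h2)
    have hmeas' : ∀ y : Γ, MeasurableSet {ω | RWAux.pp X 0 n ω = y} :=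
      fun y => (hppm 0 n) (measurableSet_singleton y)
    have huniv : (⋃ y : Γ, {ω | RWAux.pp X 0 n ω = y}) = Set.univ := by
      ext ω
      simp
    calc (∑' y : Γ, P {ω | RWAux.pp X 0 n ω = y})
        = P (⋃ y : Γ, {ω | RWAux.pp X 0 n ω = y}) := (measure_iUnion hdisj hmeas').symm
      _ = 1 := by rw [huniv, measure_univ]
  have hp_summable : Summable (fun y : Γ => (P {ω | RWAux.pp X 0 n ω = y}).toReal) :=
    ENNReal.summable_toReal (by rw [hq_tsum_one]; exact ENNReal.one_ne_top)
  have hp_tsum : (∑' y : Γ, (P {ω | RWAux.pp X 0 n ω = y}).toReal) = 1 := by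
    rw [← ENNReal.tsum_toReal_eq (fun y => hqt n y), hq_tsum_one, ENNReal.toReal_one]
  have hG1_ge_one : (1 : ℝ≥0∞) ≤ ∑' k : ℕ, P {ω | RWAux.pp X 0 k ω = (1 : Γ)} := by
    have h0 : P {ω | RWAux.pp X 0 0 ω = (1 : Γ)} = 1 := by
      have he : {ω | RWAux.pp X 0 0 ω = (1 : Γ)} = Set.univ := by
        ext ω
        simp [RWAux.pp]
      rw [he, measure_univ]
    calc (1 : ℝ≥0∞) = P {ω | RWAux.pp X 0 0 ω = (1 : Γ)} := h0.symm
      _ ≤ _ := ENNReal.le_tsum 0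
  have hgreen : greenFn P X 1 1 = ∑' k : ℕ, P {ω | RWAux.pp X 0 k ω = (1 : Γ)} := by
    simp only [greenFn, hw]
  simp only [hmap]
  simp only [hw]
  rw [hgreen]
  refine ⟨part1, part2, ?_⟩
  by_cases hG : (∑' k : ℕ, P {ω | RWAux.pp X 0 k ω = (1 : Γ)}) = ⊤
  · have hT0 : (∑' k : ℕ, P {ω | RWAux.pp X 0 k ω = (1 : Γ)}).toReal = 0 := by
      rw [hG]
      rfl
    have hterm : ∀ x : Γ, (P {ω | RWAux.pp X 0 n ω = x}).toReal *
        (- Real.log (∑' k : ℕ, (P {ω | RWAux.pp X 0 k ω = x}).toReal)) = 0 := by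
      intro x
      rcases eq_or_ne (P {ω | RWAux.pp X 0 n ω = x}) 0 with h0 | h0
      · rw [h0]
        simp
      · have hGx : (∑' m : ℕ, P {ω | RWAux.pp X 0 m ω = x}) = ⊤ := by
          have h1 := RWAux.green_ge hiid hlaw hmeas n x
          rw [hG, ENNReal.mul_top h0] at h1
          exact top_le_iff.mp h1
        have hnotsum : ¬ Summable (fun m : ℕ => (P {ω | RWAux.pp X 0 m ω = x}).toReal) := by
          intro hs
          have h2 : (∑' m : ℕ, P {ω | RWAux.pp X 0 m ω = x})
              = ENNReal.ofReal (∑' m : ℕ, (P {ω | RWAux.pp X 0 m ω = x}).toReal) := by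
            rw [ENNReal.ofReal_tsum_of_nonneg (fun m => ENNReal.toReal_nonneg) hs]
            exact tsum_congr fun m => (ENNReal.ofReal_toReal (hqt m x)).symm
          rw [hGx] at h2
          exact ENNReal.ofReal_ne_top h2.symm
        rw [tsum_eq_zero_of_not_summable hnotsum, Real.log_zero, neg_zero, mul_zero]
    have hzero : (∑' x : Γ, (P {ω | RWAux.pp X 0 n ω = x}).toReal *
        (- Real.log (∑' k : ℕ, (P {ω | RWAux.pp X 0 k ω = x}).toReal))) = 0 :=
      (tsum_congr hterm).trans tsum_zero
    rw [hzero, hT0, Real.log_zero, zero_add]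
    exact tsum_nonneg fun x =>
      Real.negMulLog_nonneg ENNReal.toReal_nonneg (htoReal_le_one _ (hq1 n x))
  · have hGx_ne : ∀ x : Γ, (∑' m : ℕ, P {ω | RWAux.pp X 0 m ω = x}) ≠ ⊤ :=
      fun x => ((RWAux.green_le hiid hlaw hmeas x).trans_lt (lt_of_le_of_ne le_top hG)).ne
    have hS_eq : ∀ x : Γ, (∑' m : ℕ, (P {ω | RWAux.pp X 0 m ω = x}).toReal)
        = (∑' m : ℕ, P {ω | RWAux.pp X 0 m ω = x}).toReal :=
      fun x => (ENNReal.tsum_toReal_eq (fun m => hqt m x)).symm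
    have hT1 : 1 ≤ (∑' k : ℕ, P {ω | RWAux.pp X 0 k ω = (1 : Γ)}).toReal := by
      have h4 := ENNReal.toReal_mono hG hG1_ge_one
      simpa using h4
    have hTpos : 0 < (∑' k : ℕ, P {ω | RWAux.pp X 0 k ω = (1 : Γ)}).toReal :=
      lt_of_lt_of_le zero_lt_one hT1
    have hlogT : 0 ≤ Real.log (∑' k : ℕ, P {ω | RWAux.pp X 0 k ω = (1 : Γ)}).toReal :=
      Real.log_nonneg hT1
    have hmulTS : ∀ x : Γ, (P {ω | RWAux.pp X 0 n ω = x}).toReal *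
          (∑' k : ℕ, P {ω | RWAux.pp X 0 k ω = (1 : Γ)}).toReal
        ≤ ∑' m : ℕ, (P {ω | RWAux.pp X 0 m ω = x}).toReal := by
      intro x
      rw [hS_eq x, ← ENNReal.toReal_mul]
      exact ENNReal.toReal_mono (hGx_ne x) (RWAux.green_ge hiid hlaw hmeas n x)
    have hSleT : ∀ x : Γ, (∑' m : ℕ, (P {ω | RWAux.pp X 0 m ω = x}).toReal)
        ≤ (∑' k : ℕ, P {ω | RWAux.pp X 0 k ω = (1 : Γ)}).toReal := fun x => by
      rw [hS_eq x]
      exact ENNReal.toReal_mono hG (RWAux.green_le hiid hlaw hmeas x)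
    have key : ∀ x : Γ,
        (P {ω | RWAux.pp X 0 n ω = x}).toReal *
            (- Real.log (∑' m : ℕ, (P {ω | RWAux.pp X 0 m ω = x}).toReal))
          + (P {ω | RWAux.pp X 0 n ω = x}).toReal *
            Real.log (∑' k : ℕ, P {ω | RWAux.pp X 0 k ω = (1 : Γ)}).toReal
        ≤ Real.negMulLog ((P {ω | RWAux.pp X 0 n ω = x}).toReal) := by
      intro x
      rcases eq_or_ne (P {ω | RWAux.pp X 0 n ω = x}) 0 with h0 | h0
      · rw [h0]
        simp
      · have hpx : 0 < (P {ω | RWAux.pp X 0 n ω = x}).toReal :=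
          ENNReal.toReal_pos h0 (hqt n x)
        have hSpos : 0 < ∑' m : ℕ, (P {ω | RWAux.pp X 0 m ω = x}).toReal :=
          lt_of_lt_of_le (by positivity) (hmulTS x)
        have hlog2 : Real.log ((P {ω | RWAux.pp X 0 n ω = x}).toReal)
              + Real.log (∑' k : ℕ, P {ω | RWAux.pp X 0 k ω = (1 : Γ)}).toReal
            ≤ Real.log (∑' m : ℕ, (P {ω | RWAux.pp X 0 m ω = x}).toReal) := by
          rw [← Real.log_mul (ne_of_gt hpx) (ne_of_gt hTpos)]
          exact Real.log_le_log (by positivity) (hmulTS x)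
        have h2 : - Real.log (∑' m : ℕ, (P {ω | RWAux.pp X 0 m ω = x}).toReal)
              + Real.log (∑' k : ℕ, P {ω | RWAux.pp X 0 k ω = (1 : Γ)}).toReal
            ≤ - Real.log ((P {ω | RWAux.pp X 0 n ω = x}).toReal) := by linarith
        have h3 := mul_le_mul_of_nonneg_left h2 hpx.le
        have h4 : Real.negMulLog ((P {ω | RWAux.pp X 0 n ω = x}).toReal)
            = (P {ω | RWAux.pp X 0 n ω = x}).toReal *
              (- Real.log ((P {ω | RWAux.pp X 0 n ω = x}).toReal)) := by
          rw [Real.negMulLog]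
          ring
        have h5 : (P {ω | RWAux.pp X 0 n ω = x}).toReal *
              (- Real.log (∑' m : ℕ, (P {ω | RWAux.pp X 0 m ω = x}).toReal))
            + (P {ω | RWAux.pp X 0 n ω = x}).toReal *
              Real.log (∑' k : ℕ, P {ω | RWAux.pp X 0 k ω = (1 : Γ)}).toReal
            = (P {ω | RWAux.pp X 0 n ω = x}).toReal *
              (- Real.log (∑' m : ℕ, (P {ω | RWAux.pp X 0 m ω = x}).toReal)
                + Real.log (∑' k : ℕ, P {ω | RWAux.pp X 0 k ω = (1 : Γ)}).toReal) := by
          ring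
        rw [h4, h5]
        exact h3
    have habs : ∀ x : Γ,
        |(P {ω | RWAux.pp X 0 n ω = x}).toReal *
            (- Real.log (∑' m : ℕ, (P {ω | RWAux.pp X 0 m ω = x}).toReal))|
          ≤ Real.negMulLog ((P {ω | RWAux.pp X 0 n ω = x}).toReal)
            + (P {ω | RWAux.pp X 0 n ω = x}).toReal *
              Real.log (∑' k : ℕ, P {ω | RWAux.pp X 0 k ω = (1 : Γ)}).toReal := by
      intro x
      rcases eq_or_ne (P {ω | RWAux.pp X 0 n ω = x}) 0 with h0 | h0
      · rw [h0]
        simp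
      · have hpx : 0 < (P {ω | RWAux.pp X 0 n ω = x}).toReal :=
          ENNReal.toReal_pos h0 (hqt n x)
        have hSpos : 0 < ∑' m : ℕ, (P {ω | RWAux.pp X 0 m ω = x}).toReal :=
          lt_of_lt_of_le (by positivity) (hmulTS x)
        have hub : Real.log (∑' m : ℕ, (P {ω | RWAux.pp X 0 m ω = x}).toReal)
            ≤ Real.log (∑' k : ℕ, P {ω | RWAux.pp X 0 k ω = (1 : Γ)}).toReal :=
          Real.log_le_log hSpos (hSleT x)
        have hlb : Real.log ((P {ω | RWAux.pp X 0 n ω = x}).toReal)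
              + Real.log (∑' k : ℕ, P {ω | RWAux.pp X 0 k ω = (1 : Γ)}).toReal
            ≤ Real.log (∑' m : ℕ, (P {ω | RWAux.pp X 0 m ω = x}).toReal) := by
          rw [← Real.log_mul (ne_of_gt hpx) (ne_of_gt hTpos)]
          exact Real.log_le_log (by positivity) (hmulTS x)
        have e1 := mul_le_mul_of_nonneg_left hlb hpx.le
        have e2 := mul_le_mul_of_nonneg_left hub hpx.le
        have hnm : Real.negMulLog ((P {ω | RWAux.pp X 0 n ω = x}).toReal)
            = -((P {ω | RWAux.pp X 0 n ω = x}).toReal *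
                Real.log ((P {ω | RWAux.pp X 0 n ω = x}).toReal)) := by
          rw [Real.negMulLog]
          ring
        have hpT : 0 ≤ (P {ω | RWAux.pp X 0 n ω = x}).toReal *
            Real.log (∑' k : ℕ, P {ω | RWAux.pp X 0 k ω = (1 : Γ)}).toReal :=
          mul_nonneg hpx.le hlogT
        rw [abs_le]
        constructor
        · rw [hnm]
          nlinarith [e2]
        · rw [hnm]
          nlinarith [e1]
    have s1 : Summable (fun x : Γ => (P {ω | RWAux.pp X 0 n ω = x}).toReal *
        Real.log (∑' k : ℕ, P {ω | RWAux.pp X 0 k ω = (1 : Γ)}).toReal) :=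
      hp_summable.mul_right _
    have s2 : Summable (fun x : Γ => (P {ω | RWAux.pp X 0 n ω = x}).toReal *
        (- Real.log (∑' m : ℕ, (P {ω | RWAux.pp X 0 m ω = x}).toReal))) := by
      have hb : Summable (fun x : Γ =>
          Real.negMulLog ((P {ω | RWAux.pp X 0 n ω = x}).toReal)
            + (P {ω | RWAux.pp X 0 n ω = x}).toReal *
              Real.log (∑' k : ℕ, P {ω | RWAux.pp X 0 k ω = (1 : Γ)}).toReal) :=
        hsummable_nml.add s1
      exact summable_abs_iff.mp (hb.of_nonneg_of_le (fun x => abs_nonneg _) habs)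
    have hsum_pT : (∑' x : Γ, (P {ω | RWAux.pp X 0 n ω = x}).toReal *
          Real.log (∑' k : ℕ, P {ω | RWAux.pp X 0 k ω = (1 : Γ)}).toReal)
        = Real.log (∑' k : ℕ, P {ω | RWAux.pp X 0 k ω = (1 : Γ)}).toReal := by
      rw [tsum_mul_right, hp_tsum, one_mul]
    calc (∑' x : Γ, (P {ω | RWAux.pp X 0 n ω = x}).toReal *
            (- Real.log (∑' m : ℕ, (P {ω | RWAux.pp X 0 m ω = x}).toReal)))
          + Real.log (∑' k : ℕ, P {ω | RWAux.pp X 0 k ω = (1 : Γ)}).toReal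
        = (∑' x : Γ, (P {ω | RWAux.pp X 0 n ω = x}).toReal *
            (- Real.log (∑' m : ℕ, (P {ω | RWAux.pp X 0 m ω = x}).toReal)))
          + ∑' x : Γ, (P {ω | RWAux.pp X 0 n ω = x}).toReal *
            Real.log (∑' k : ℕ, P {ω | RWAux.pp X 0 k ω = (1 : Γ)}).toReal := by
          rw [hsum_pT]
      _ = ∑' x : Γ, ((P {ω | RWAux.pp X 0 n ω = x}).toReal *
            (- Real.log (∑' m : ℕ, (P {ω | RWAux.pp X 0 m ω = x}).toReal))
          + (P {ω | RWAux.pp X 0 n ω = x}).toReal *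
            Real.log (∑' k : ℕ, P {ω | RWAux.pp X 0 k ω = (1 : Γ)}).toReal) :=
          (Summable.tsum_add s2 s1).symm
      _ ≤ ∑' x : Γ, Real.negMulLog ((P {ω | RWAux.pp X 0 n ω = x}).toReal) :=
          Summable.tsum_le_tsum key (s2.add s1) hsummable_nml
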